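/- arXiv:2201.02522 — 2 statements merged into one kernel-verified Lean document; each statement's English description precedes it below -/
import Mathlib

section
/- Define v : ℝ² × (−∞,0) → ℝ by v(x,t) = (1 + 2·cosh(−t)·‖x‖² + ‖x‖⁴)/(8·sinh(−t)). Then v is smooth, positive, and satisfies ∂v/∂t = v·Δv − ‖∇v‖² at every point of ℝ² × (−∞,0), where ∇v and Δv denote the gradient and Laplacian of v(·,t) with respect to the Euclidean metric on ℝ². -/
/- We identify `ℝ²` with `ℂ`. Partial derivatives, the Laplacian, and the squared
norm of the gradient with respect to the Euclidean metric on `ℝ² ≅ ℂ`. -/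

/-- Partial derivative in the first Euclidean coordinate. -/
noncomputable def pdxR (f : ℂ → ℝ) (z : ℂ) : ℝ :=
  deriv (fun s : ℝ => f (z + (s : ℂ))) 0

/-- Partial derivative in the second Euclidean coordinate. -/
noncomputable def pdyR (f : ℂ → ℝ) (z : ℂ) : ℝ :=
  deriv (fun s : ℝ => f (z + (s : ℂ) * Complex.I)) 0

/-- Euclidean Laplacian on `ℝ² ≅ ℂ`. -/
noncomputable def lapR (f : ℂ → ℝ) (z : ℂ) : ℝ :=
  pdxR (pdxR f) z + pdyR (pdyR f) z

/-- Squared Euclidean norm of the gradient on `ℝ² ≅ ℂ`. -/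
noncomputable def gradSq (f : ℂ → ℝ) (z : ℂ) : ℝ :=
  (pdxR f z) ^ 2 + (pdyR f z) ^ 2

/-- The conformal factor of the King–Rosenau solution:
`v(x,t) = (1 + 2 cosh(−t) ‖x‖² + ‖x‖⁴)/(8 sinh(−t))`, for `t < 0`. -/
noncomputable def krV : ℂ × ℝ → ℝ :=
  fun p => (1 + 2 * Real.cosh (-p.2) * ‖p.1‖ ^ 2 + ‖p.1‖ ^ 4) / (8 * Real.sinh (-p.2))

/-! ### Auxiliary lemmas -/

private lemma nsq (w : ℂ) : ‖w‖ ^ 2 = w.re ^ 2 + w.im ^ 2 := by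
  rw [Complex.sq_norm, Complex.normSq_apply]; ring

private lemma nfour (w : ℂ) : ‖w‖ ^ 4 = (w.re ^ 2 + w.im ^ 2) ^ 2 := by
  rw [show (4 : ℕ) = 2 * 2 from rfl, pow_mul, nsq]

private lemma hd_sq (a b : ℝ) : HasDerivAt (fun s : ℝ => (a + s) ^ 2 + b ^ 2) (2 * a) 0 := by
  have h : HasDerivAt (fun s : ℝ => a + s) 1 0 := (hasDerivAt_id 0).const_add a
  have h2 := (h.pow 2).add_const (b ^ 2)
  refine h2.congr_deriv ?_
  norm_num

private lemma hdV (a b k A : ℝ) :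
    HasDerivAt (fun s : ℝ => (1 + 2 * k * ((a + s) ^ 2 + b ^ 2) + ((a + s) ^ 2 + b ^ 2) ^ 2) / A)
      ((4 * k * a + 4 * (a ^ 2 + b ^ 2) * a) / A) 0 := by
  have h := hd_sq a b
  have h2 := (((h.const_mul (2 * k)).const_add 1).add (h.pow 2)).div_const A
  refine h2.congr_deriv ?_
  norm_num
  ring

private lemma hdQ (a b k A : ℝ) :
    HasDerivAt (fun s : ℝ => (4 * k * (a + s) + 4 * ((a + s) ^ 2 + b ^ 2) * (a + s)) / A)
      ((4 * k + 12 * a ^ 2 + 4 * b ^ 2) / A) 0 := by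
  have h1 : HasDerivAt (fun s : ℝ => a + s) 1 0 := (hasDerivAt_id 0).const_add a
  have h := hd_sq a b
  have h2 := ((h1.const_mul (4 * k)).add (((h.const_mul 4).mul h1))).div_const A
  refine h2.congr_deriv ?_
  norm_num
  ring

/-- The King–Rosenau conformal factor
`v(x,t) = (1 + 2 cosh(−t) ‖x‖² + ‖x‖⁴)/(8 sinh(−t))` is smooth and positive on
`ℝ² × (−∞,0)` and satisfies the two-dimensional Ricci flow equation
`∂v/∂t = v·Δv − ‖∇v‖²` there, where `∇` and `Δ` are taken with respect to the
Euclidean metric on `ℝ²` in the `x` variable. -/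
theorem king_rosenau_solves_ricci_flow :
    ContDiffOn ℝ (⊤ : ℕ∞) krV {p : ℂ × ℝ | p.2 < 0} ∧
    ∀ p : ℂ × ℝ, p.2 < 0 → 0 < krV p ∧
      deriv (fun s : ℝ => krV (p.1, s)) p.2
        = krV p * lapR (fun z => krV (z, p.2)) p.1
          - gradSq (fun z => krV (z, p.2)) p.1 := by
  constructor
  · -- smoothness
    have hkr : krV = fun p : ℂ × ℝ =>
        (1 + 2 * Real.cosh (-p.2) * (p.1.re ^ 2 + p.1.im ^ 2)
          + (p.1.re ^ 2 + p.1.im ^ 2) ^ 2) / (8 * Real.sinh (-p.2)) := by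
      funext p; simp only [krV, nsq, nfour]
    rw [hkr]
    have hre : ContDiff ℝ (⊤ : ℕ∞) (fun p : ℂ × ℝ => p.1.re) :=
      Complex.reCLM.contDiff.comp contDiff_fst
    have him : ContDiff ℝ (⊤ : ℕ∞) (fun p : ℂ × ℝ => p.1.im) :=
      Complex.imCLM.contDiff.comp contDiff_fst
    have hr2 : ContDiff ℝ (⊤ : ℕ∞) (fun p : ℂ × ℝ => p.1.re ^ 2 + p.1.im ^ 2) :=
      (hre.pow 2).add (him.pow 2)
    have hnum : ContDiff ℝ (⊤ : ℕ∞) (fun p : ℂ × ℝ =>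
        1 + 2 * Real.cosh (-p.2) * (p.1.re ^ 2 + p.1.im ^ 2)
          + (p.1.re ^ 2 + p.1.im ^ 2) ^ 2) := by
      refine ContDiff.add (contDiff_const.add ?_) (hr2.pow 2)
      exact (contDiff_const.mul (Real.contDiff_cosh.comp contDiff_snd.neg)).mul hr2
    have hden : ContDiff ℝ (⊤ : ℕ∞) (fun p : ℂ × ℝ => 8 * Real.sinh (-p.2)) :=
      contDiff_const.mul (Real.contDiff_sinh.comp contDiff_snd.neg)
    refine hnum.contDiffOn.div hden.contDiffOn ?_
    intro p hp
    have : 0 < Real.sinh (-p.2) := Real.sinh_pos_iff.mpr (neg_pos.mpr hp)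
    positivity
  · rintro ⟨z, t⟩ ht
    simp only at ht ⊢
    set a := z.re
    set b := z.im
    set k := Real.cosh (-t) with hk
    set S := Real.sinh (-t) with hS
    have hSpos : 0 < S := Real.sinh_pos_iff.mpr (neg_pos.mpr ht)
    have hkpos : 0 < k := Real.cosh_pos (-t)
    have hS0 : S ≠ 0 := ne_of_gt hSpos
    constructor
    · -- positivity
      have h1 : 0 < 1 + 2 * k * ‖z‖ ^ 2 + ‖z‖ ^ 4 := by positivity
      exact div_pos h1 (by positivity)
    · -- the PDE
      -- first spatial derivative in x, at any point w
      have Px : ∀ w : ℂ, pdxR (fun z => krV (z, t)) w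
          = (4 * k * w.re + 4 * (w.re ^ 2 + w.im ^ 2) * w.re) / (8 * S) := by
        intro w
        have he : (fun s : ℝ => krV (w + (s : ℂ), t))
            = fun s : ℝ => (1 + 2 * k * ((w.re + s) ^ 2 + w.im ^ 2)
              + ((w.re + s) ^ 2 + w.im ^ 2) ^ 2) / (8 * S) := by
          funext s
          simp only [krV, nsq, nfour, Complex.add_re, Complex.add_im, Complex.ofReal_re,
            Complex.ofReal_im, add_zero]
          rw [← hk, ← hS]
        rw [pdxR, he, (hdV w.re w.im k (8 * S)).deriv]
      have Py : ∀ w : ℂ, pdyR (fun z => krV (z, t)) w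
          = (4 * k * w.im + 4 * (w.re ^ 2 + w.im ^ 2) * w.im) / (8 * S) := by
        intro w
        have he : (fun s : ℝ => krV (w + (s : ℂ) * Complex.I, t))
            = fun s : ℝ => (1 + 2 * k * ((w.im + s) ^ 2 + w.re ^ 2)
              + ((w.im + s) ^ 2 + w.re ^ 2) ^ 2) / (8 * S) := by
          funext s
          simp only [krV, nsq, nfour, Complex.add_re, Complex.add_im, Complex.mul_re,
            Complex.mul_im, Complex.I_re, Complex.I_im, Complex.ofReal_re, Complex.ofReal_im]
          rw [← hk, ← hS]
          ring_nf
        rw [pdyR, he, (hdV w.im w.re k (8 * S)).deriv]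
        ring
      -- second derivatives
      have Pxx : pdxR (pdxR (fun z => krV (z, t))) z
          = (4 * k + 12 * a ^ 2 + 4 * b ^ 2) / (8 * S) := by
        have he : (fun s : ℝ => pdxR (fun z => krV (z, t)) (z + (s : ℂ)))
            = fun s : ℝ => (4 * k * (a + s) + 4 * ((a + s) ^ 2 + b ^ 2) * (a + s)) / (8 * S) := by
          funext s
          rw [Px]
          simp only [Complex.add_re, Complex.add_im, Complex.ofReal_re, Complex.ofReal_im,
            add_zero]
          rfl
        rw [pdxR, he, (hdQ a b k (8 * S)).deriv]
      have Pyy : pdyR (pdyR (fun z => krV (z, t))) z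
          = (4 * k + 4 * a ^ 2 + 12 * b ^ 2) / (8 * S) := by
        have he : (fun s : ℝ => pdyR (fun z => krV (z, t)) (z + (s : ℂ) * Complex.I))
            = fun s : ℝ => (4 * k * (b + s) + 4 * ((b + s) ^ 2 + a ^ 2) * (b + s)) / (8 * S) := by
          funext s
          rw [Py]
          simp only [Complex.add_re, Complex.add_im, Complex.mul_re, Complex.mul_im,
            Complex.I_re, Complex.I_im, Complex.ofReal_re, Complex.ofReal_im]
          ring
        rw [pdyR, he, (hdQ b a k (8 * S)).deriv]
        ring
      -- time derivative
      have ht' : deriv (fun s : ℝ => krV (z, s)) t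
          = ((-2 * S) * (a ^ 2 + b ^ 2) * (8 * S)
              - (1 + 2 * k * (a ^ 2 + b ^ 2) + (a ^ 2 + b ^ 2) ^ 2) * (8 * (-k)))
            / (8 * S) ^ 2 := by
        have he : (fun s : ℝ => krV (z, s))
            = fun s : ℝ => (1 + 2 * Real.cosh (-s) * (a ^ 2 + b ^ 2)
              + (a ^ 2 + b ^ 2) ^ 2) / (8 * Real.sinh (-s)) := by
          funext s
          simp only [krV, nsq, nfour]
          rfl
        have hcosh : HasDerivAt (fun s : ℝ => Real.cosh (-s)) (-S) t := by
          have h := (Real.hasDerivAt_cosh (-t)).comp t (hasDerivAt_neg t)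
          rw [hS]
          simpa only [Function.comp_def, mul_neg_one] using h
        have hsinh : HasDerivAt (fun s : ℝ => Real.sinh (-s)) (-k) t := by
          have h := (Real.hasDerivAt_sinh (-t)).comp t (hasDerivAt_neg t)
          rw [hk]
          simpa only [Function.comp_def, mul_neg_one] using h
        have hnum : HasDerivAt (fun s : ℝ => 1 + 2 * Real.cosh (-s) * (a ^ 2 + b ^ 2)
            + (a ^ 2 + b ^ 2) ^ 2)
            ((-2 * S) * (a ^ 2 + b ^ 2)) t := by
          have := (((hcosh.const_mul 2).mul_const (a ^ 2 + b ^ 2)).const_add 1).add_const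
            ((a ^ 2 + b ^ 2) ^ 2)
          refine this.congr_deriv ?_
          ring
        have hden : HasDerivAt (fun s : ℝ => 8 * Real.sinh (-s)) (8 * (-k)) t :=
          hsinh.const_mul 8
        have hden0 : 8 * Real.sinh (-t) ≠ 0 := by rw [← hS]; positivity
        have hfull := hnum.fun_div hden hden0
        rw [he, hfull.deriv]
      rw [ht']
      -- assemble
      simp only [lapR, gradSq, Pxx, Pyy, Px z, Py z]
      have hv : krV (z, t) = (1 + 2 * k * (a ^ 2 + b ^ 2) + (a ^ 2 + b ^ 2) ^ 2) / (8 * S) := by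
        simp only [krV, nsq, nfour]
        rfl
      rw [hv]
      have hid : k ^ 2 - S ^ 2 = 1 := Real.cosh_sq_sub_sinh_sq (-t)
      linear_combination (16 * (a ^ 2 + b ^ 2) / (64 * S ^ 2)) * hid
end

section
/- Define v : ℝ² × (−∞,0) → ℝ by v(x,t) = (1 + 2·cosh(−t)·‖x‖² + ‖x‖⁴)/(8·sinh(−t)). Then for every (x,t) ∈ ℝ² × (−∞,0), v(x,t)·Δv(x,t) − ‖∇v(x,t)‖² = (cosh(−t) + 2‖x‖² + cosh(−t)·‖x‖⁴)/(8·sinh(−t)²); in particular v·Δv − ‖∇v‖² > 0, so the scalar curvature R = v⁻¹(vΔv − ‖∇v‖²) of the conformal metric v⁻¹(dx₁²+dx₂²) is positive everywhere. -/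
lemma kr_norm_sq_eq (w : ℂ) : ‖w‖^2 = w.re^2 + w.im^2 := by
  rw [Complex.sq_norm, Complex.normSq_apply]; ring

lemma kr_key_deriv (a b c s : ℝ) :
    deriv (fun r : ℝ => (1 + 2*c*((a+r)^2 + b^2) + ((a+r)^2+b^2)^2)/(8*s)) 0
      = a*(c + (a^2+b^2))/(2*s) := by
  have h1 : HasDerivAt (fun r : ℝ => a + r) 1 0 := (hasDerivAt_id 0).const_add a
  have h2 : HasDerivAt (fun r : ℝ => (a+r)^2 + b^2) (2*(a+0)^1*1) 0 :=
    (h1.pow 2).add_const (b^2)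
  have h3 : HasDerivAt (fun r : ℝ => 1 + 2*c*((a+r)^2+b^2) + ((a+r)^2+b^2)^2)
      (0 + 2*c*(2*(a+0)^1*1) + 2*((a+0)^2+b^2)^1*(2*(a+0)^1*1)) 0 :=
    ((hasDerivAt_const 0 (1:ℝ)).add (h2.const_mul (2*c))).add (h2.pow 2)
  rw [(h3.div_const (8*s)).deriv,
    show (0 + 2*c*(2*(a+0)^1*1) + 2*((a+0)^2+b^2)^1*(2*(a+0)^1*1))
      = 4*(a*(c + (a^2+b^2))) by ring,
    show (8:ℝ)*s = 4*(2*s) by ring,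
    mul_div_mul_left _ _ (by norm_num : (4:ℝ) ≠ 0)]

lemma kr_key_deriv2 (a b c s : ℝ) :
    deriv (fun r : ℝ => (a+r)*(c + ((a+r)^2+b^2))/(2*s)) 0
      = (c + (a^2+b^2) + 2*a^2)/(2*s) := by
  have h1 : HasDerivAt (fun r : ℝ => a + r) 1 0 := (hasDerivAt_id 0).const_add a
  have h2 : HasDerivAt (fun r : ℝ => c + ((a+r)^2 + b^2)) (2*(a+0)^1*1) 0 :=
    ((h1.pow 2).add_const (b^2)).const_add c
  have h3 : HasDerivAt (fun r : ℝ => (a+r)*(c + ((a+r)^2+b^2)))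
      (1 * (c + ((a + 0) ^ 2 + b ^ 2)) + (a + 0) * (2 * (a + 0) ^ 1 * 1)) 0 := h1.mul h2
  rw [(h3.div_const (2*s)).deriv]
  congr 1
  ring

lemma kr_pdx_v (c s : ℝ) (z : ℂ) :
    pdxR (fun w => (1 + 2*c*‖w‖^2 + ‖w‖^4)/(8*s)) z
      = z.re*(c + (z.re^2+z.im^2))/(2*s) := by
  unfold pdxR
  have he : (fun r : ℝ => (1 + 2*c*‖z+(r:ℂ)‖^2 + ‖z+(r:ℂ)‖^4)/(8*s))
      = fun r : ℝ => (1 + 2*c*((z.re+r)^2 + z.im^2) + ((z.re+r)^2+z.im^2)^2)/(8*s) := by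
    funext r
    have h : ‖z+(r:ℂ)‖^2 = (z.re+r)^2 + z.im^2 := by
      rw [kr_norm_sq_eq]; simp
    rw [show ∀ w : ℂ, ‖w‖^4 = (‖w‖^2)^2 from fun w => by ring, h]
  rw [he, kr_key_deriv]

lemma kr_pdy_v (c s : ℝ) (z : ℂ) :
    pdyR (fun w => (1 + 2*c*‖w‖^2 + ‖w‖^4)/(8*s)) z
      = z.im*(c + (z.im^2+z.re^2))/(2*s) := by
  unfold pdyR
  have he : (fun r : ℝ => (1 + 2*c*‖z+(r:ℂ)*Complex.I‖^2 + ‖z+(r:ℂ)*Complex.I‖^4)/(8*s))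
      = fun r : ℝ => (1 + 2*c*((z.im+r)^2 + z.re^2) + ((z.im+r)^2+z.re^2)^2)/(8*s) := by
    funext r
    have h : ‖z+(r:ℂ)*Complex.I‖^2 = (z.im+r)^2 + z.re^2 := by
      rw [kr_norm_sq_eq]; simp; ring
    rw [show ∀ w : ℂ, ‖w‖^4 = (‖w‖^2)^2 from fun w => by ring, h]
  rw [he, kr_key_deriv]

lemma kr_pdxx_v (c s : ℝ) (z : ℂ) :
    pdxR (pdxR (fun w => (1 + 2*c*‖w‖^2 + ‖w‖^4)/(8*s))) z
      = (c + (z.re^2+z.im^2) + 2*z.re^2)/(2*s) := by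
  have he : (fun r : ℝ => pdxR (fun w => (1 + 2*c*‖w‖^2 + ‖w‖^4)/(8*s)) (z+(r:ℂ)))
      = fun r : ℝ => (z.re+r)*(c + ((z.re+r)^2+z.im^2))/(2*s) := by
    funext r
    rw [kr_pdx_v]
    simp
  calc pdxR (pdxR (fun w => (1 + 2*c*‖w‖^2 + ‖w‖^4)/(8*s))) z
      = deriv (fun r : ℝ => pdxR (fun w => (1 + 2*c*‖w‖^2 + ‖w‖^4)/(8*s)) (z+(r:ℂ))) 0 := rfl
    _ = (c + (z.re^2+z.im^2) + 2*z.re^2)/(2*s) := by rw [he, kr_key_deriv2]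

lemma kr_pdyy_v (c s : ℝ) (z : ℂ) :
    pdyR (pdyR (fun w => (1 + 2*c*‖w‖^2 + ‖w‖^4)/(8*s))) z
      = (c + (z.im^2+z.re^2) + 2*z.im^2)/(2*s) := by
  have he : (fun r : ℝ => pdyR (fun w => (1 + 2*c*‖w‖^2 + ‖w‖^4)/(8*s)) (z+(r:ℂ)*Complex.I))
      = fun r : ℝ => (z.im+r)*(c + ((z.im+r)^2+z.re^2))/(2*s) := by
    funext r
    rw [kr_pdy_v]
    simp
  calc pdyR (pdyR (fun w => (1 + 2*c*‖w‖^2 + ‖w‖^4)/(8*s))) z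
      = deriv (fun r : ℝ => pdyR (fun w => (1 + 2*c*‖w‖^2 + ‖w‖^4)/(8*s)) (z+(r:ℂ)*Complex.I)) 0 := rfl
    _ = (c + (z.im^2+z.re^2) + 2*z.im^2)/(2*s) := by rw [he, kr_key_deriv2]

/-- For the King–Rosenau conformal factor and every
`(x,t) ∈ ℝ² × (−∞,0)`,
`v·Δv − ‖∇v‖² = (cosh(−t) + 2‖x‖² + cosh(−t)‖x‖⁴)/(8 sinh(−t)²)`;
in particular `v·Δv − ‖∇v‖² > 0`, so the scalar curvature
`R = v⁻¹(v·Δv − ‖∇v‖²)` of the conformal metric `v⁻¹ δᵢⱼ` is positive. -/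
theorem king_rosenau_positive_curvature :
    ∀ p : ℂ × ℝ, p.2 < 0 →
      (krV p * lapR (fun z => krV (z, p.2)) p.1 - gradSq (fun z => krV (z, p.2)) p.1
        = (Real.cosh (-p.2) + 2 * ‖p.1‖ ^ 2 + Real.cosh (-p.2) * ‖p.1‖ ^ 4)
            / (8 * (Real.sinh (-p.2)) ^ 2)) ∧
      (0 < krV p * lapR (fun z => krV (z, p.2)) p.1
            - gradSq (fun z => krV (z, p.2)) p.1) ∧
      (0 < (krV p)⁻¹ * (krV p * lapR (fun z => krV (z, p.2)) p.1
            - gradSq (fun z => krV (z, p.2)) p.1)) := by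
  rintro ⟨z, t⟩ hp
  simp only at hp ⊢
  set c := Real.cosh (-t) with hcdef
  set s := Real.sinh (-t) with hsdef
  have hs : 0 < s := Real.sinh_pos_iff.mpr (by linarith)
  have hc : 1 ≤ c := Real.one_le_cosh (-t)
  have hN := kr_norm_sq_eq z
  have hfun : (fun w : ℂ => krV (w, t)) = fun w => (1 + 2*c*‖w‖^2 + ‖w‖^4)/(8*s) := rfl
  have hkr : krV (z, t) = (1 + 2*c*‖z‖^2 + ‖z‖^4)/(8*s) := rfl
  have hz2 : (0:ℝ) ≤ ‖z‖^2 := by positivity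
  have hz4 : (0:ℝ) ≤ ‖z‖^4 := by positivity
  have key : krV (z, t) * lapR (fun w => krV (w, t)) z - gradSq (fun w => krV (w, t)) z
      = (c + 2 * ‖z‖^2 + c * ‖z‖^4) / (8 * s^2) := by
    rw [hfun, hkr, lapR, gradSq, kr_pdxx_v, kr_pdyy_v, kr_pdx_v, kr_pdy_v,
      show ‖z‖^4 = (‖z‖^2)^2 by ring, hN]
    field_simp
    ring
  refine ⟨key, ?_, ?_⟩
  · rw [key]
    exact div_pos (by nlinarith) (by positivity)
  · rw [key]
    have hv : 0 < krV (z, t) := by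
      rw [hkr]; exact div_pos (by nlinarith) (by positivity)
    exact mul_pos (inv_pos.mpr hv) (div_pos (by nlinarith) (by positivity))
end
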